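/- If $f=\sum_{i=0}^{d_1}g_i\,x^i(x+1)^{d_1-i}$ and $g=\sum_{j=0}^{d_2}h_j\,x^j(x+1)^{d_2-j}$ with all $g_i,h_j\ge 0$, then the diamond product $(f\diamond g)(x)=\sum_{k\ge 0}\frac{f^{(k)}(x)}{k!}\frac{g^{(k)}(x)}{k!}x^k(x+1)^k$ is magic positive of degree $d_1+d_2$, i.e., expressible as $\sum_{i=0}^{d_1+d_2}c_i\,x^i(x+1)^{d_1+d_2-i}$ with all $c_i\ge 0$. -/

import Mathlib

open Polynomial

def MP (D : ℕ) (p : Polynomial ℝ) : Prop :=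
  ∃ c : ℕ → ℝ, (∀ i, 0 ≤ c i) ∧
    p = ∑ i ∈ Finset.range (D + 1), C (c i) * X ^ i * (X + 1) ^ (D - i)

lemma MP.zero (D : ℕ) : MP D 0 :=
  ⟨fun _ => 0, fun _ => le_refl _, by simp⟩

lemma MP.add {D : ℕ} {p q : Polynomial ℝ} (hp : MP D p) (hq : MP D q) :
    MP D (p + q) := by
  obtain ⟨c, hc, rfl⟩ := hp
  obtain ⟨e, he, rfl⟩ := hq
  refine ⟨fun i => c i + e i, fun i => add_nonneg (hc i) (he i), ?_⟩
  rw [← Finset.sum_add_distrib]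
  refine Finset.sum_congr rfl fun i _ => ?_
  rw [C_add]; ring

lemma MP.smul {D : ℕ} {p : Polynomial ℝ} (a : ℝ) (ha : 0 ≤ a) (hp : MP D p) :
    MP D (C a * p) := by
  obtain ⟨c, hc, rfl⟩ := hp
  refine ⟨fun i => a * c i, fun i => mul_nonneg ha (hc i), ?_⟩
  rw [Finset.mul_sum]
  refine Finset.sum_congr rfl fun i _ => ?_
  rw [C_mul]; ring

lemma MP.basis {s t D : ℕ} (h : s + t = D) : MP D (X ^ s * (X + 1) ^ t) := by
  have ht : t = D - s := by omega
  subst ht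
  refine ⟨fun i => if i = s then 1 else 0, fun i => by positivity, ?_⟩
  rw [Finset.sum_eq_single s]
  · simp
  · intro b _ hb; simp [hb]
  · intro hs; exact absurd (Finset.mem_range.mpr (by omega)) hs

lemma MP.finsum {D : ℕ} {ι : Type*} (s : Finset ι) (f : ι → Polynomial ℝ)
    (h : ∀ i ∈ s, MP D (f i)) : MP D (∑ i ∈ s, f i) := by
  classical
  induction s using Finset.induction with
  | empty => simpa using MP.zero D
  | @insert a s hx ih =>
    rw [Finset.sum_insert hx]
    exact (h _ (by simp)).add (ih fun i hi => h i (by simp [hi]))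

lemma MP.mul {D E : ℕ} {p q : Polynomial ℝ} (hp : MP D p) (hq : MP E q) :
    MP (D + E) (p * q) := by
  obtain ⟨c, hc, rfl⟩ := hp
  obtain ⟨e, he, rfl⟩ := hq
  rw [Finset.sum_mul_sum]
  refine MP.finsum _ _ fun i hi => MP.finsum _ _ fun j hj => ?_
  simp only [Finset.mem_range] at hi hj
  have key : C (c i) * X ^ i * (X + 1) ^ (D - i) * (C (e j) * X ^ j * (X + 1) ^ (E - j))
      = C (c i * e j) * (X ^ (i + j) * (X + 1) ^ ((D - i) + (E - j))) := by
    rw [C_mul, pow_add, pow_add]; ring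
  rw [key]
  exact MP.smul _ (mul_nonneg (hc i) (he j)) (MP.basis (by omega))

lemma deriv_basis (i m : ℕ) :
    derivative (X ^ i * (X + 1) ^ m : Polynomial ℝ)
      = C (i : ℝ) * (X ^ (i - 1) * (X + 1) ^ m)
        + C (m : ℝ) * (X ^ i * (X + 1) ^ (m - 1)) := by
  rw [derivative_mul, derivative_X_pow, derivative_pow, derivative_add,
    derivative_X, derivative_one, add_zero, mul_one]
  simp only [C_eq_natCast]
  ring

lemma MP.deriv {D : ℕ} {p : Polynomial ℝ} (hp : MP D p) :
    MP (D - 1) (derivative p) := by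
  obtain ⟨c, hc, rfl⟩ := hp
  rw [derivative_sum]
  refine MP.finsum _ _ fun i hi => ?_
  simp only [Finset.mem_range] at hi
  rw [mul_assoc, derivative_mul, derivative_C, zero_mul, zero_add, deriv_basis]
  have key : C (c i) * (C (i : ℝ) * (X ^ (i - 1) * (X + 1) ^ (D - i))
        + C ((D - i : ℕ) : ℝ) * (X ^ i * (X + 1) ^ (D - i - 1)))
      = C (c i * (i : ℝ)) * (X ^ (i - 1) * (X + 1) ^ (D - i))
        + C (c i * ((D - i : ℕ) : ℝ)) * (X ^ i * (X + 1) ^ (D - i - 1)) := by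
    rw [C_mul, C_mul]; ring
  rw [key]
  refine MP.add ?_ ?_
  · rcases Nat.eq_zero_or_pos i with hi0 | hi0
    · subst hi0; simpa using MP.zero (D - 1)
    · exact MP.smul _ (mul_nonneg (hc i) (Nat.cast_nonneg i)) (MP.basis (by omega))
  · rcases Nat.eq_zero_or_pos (D - i) with hDi | hDi
    · rw [hDi]; simpa using MP.zero (D - 1)
    · exact MP.smul _ (mul_nonneg (hc i) (Nat.cast_nonneg _)) (MP.basis (by omega))

lemma MP.iterDeriv {D : ℕ} {p : Polynomial ℝ} (hp : MP D p) (k : ℕ) :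
    MP (D - k) (derivative^[k] p) := by
  induction k with
  | zero => simpa using hp
  | succ n ih =>
    rw [Function.iterate_succ_apply']
    have := ih.deriv
    have heq : D - n - 1 = D - (n + 1) := by omega
    rwa [heq] at this

lemma MP.natDegree_le {D : ℕ} {p : Polynomial ℝ} (hp : MP D p) :
    p.natDegree ≤ D := by
  obtain ⟨c, hc, rfl⟩ := hp
  refine Polynomial.natDegree_sum_le_of_forall_le _ _ fun i hi => ?_
  simp only [Finset.mem_range] at hi
  calc (C (c i) * X ^ i * (X + 1) ^ (D - i)).natDegree
      ≤ (C (c i) * X ^ i).natDegree + ((X + 1 : Polynomial ℝ) ^ (D - i)).natDegree :=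
        natDegree_mul_le
    _ ≤ ((C (c i)).natDegree + (X ^ i : Polynomial ℝ).natDegree)
        + ((X + 1 : Polynomial ℝ) ^ (D - i)).natDegree := by
        exact Nat.add_le_add_right (natDegree_mul_le (p := C (c i)) (q := X ^ i)) _
    _ ≤ (0 + i) + (D - i) * 1 := by
        refine add_le_add (add_le_add ?_ ?_) ?_
        · simp
        · simp
        · refine natDegree_pow_le.trans ?_
          have : (X + 1 : Polynomial ℝ).natDegree = 1 := by
            rw [← C_1]; exact natDegree_X_add_C 1
          rw [this]
    _ ≤ D := by omega

/-- The diamond product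
`(f ⋄ g)(x) = ∑_{k ≥ 0} f^{(k)}(x)/k! ⋅ g^{(k)}(x)/k! ⋅ x^k (x+1)^k`. -/
noncomputable def diamond (f g : Polynomial ℝ) : Polynomial ℝ :=
  ∑ k ∈ Finset.range (f.natDegree + g.natDegree + 1),
    Polynomial.C (((k.factorial : ℝ))⁻¹ * ((k.factorial : ℝ))⁻¹) *
      (Polynomial.derivative^[k] f) * (Polynomial.derivative^[k] g) *
      (Polynomial.X * (Polynomial.X + 1)) ^ k

/-- If `f` and `g` are magic positive of degrees `d₁` and `d₂`, then `f ⋄ g`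
is magic positive of degree `d₁ + d₂`. -/
theorem diamond_magic_positive (d₁ d₂ : ℕ) (g h : ℕ → ℝ)
    (hg : ∀ i, 0 ≤ g i) (hh : ∀ j, 0 ≤ h j) (f G : Polynomial ℝ)
    (hf : f = ∑ i ∈ Finset.range (d₁ + 1),
      Polynomial.C (g i) * Polynomial.X ^ i * (Polynomial.X + 1) ^ (d₁ - i))
    (hG : G = ∑ j ∈ Finset.range (d₂ + 1),
      Polynomial.C (h j) * Polynomial.X ^ j * (Polynomial.X + 1) ^ (d₂ - j)) :
    ∃ c : ℕ → ℝ, (∀ i, 0 ≤ c i) ∧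
      diamond f G = ∑ i ∈ Finset.range (d₁ + d₂ + 1),
        Polynomial.C (c i) * Polynomial.X ^ i * (Polynomial.X + 1) ^ (d₁ + d₂ - i) := by
  have hf' : MP d₁ f := ⟨g, hg, hf⟩
  have hG' : MP d₂ G := ⟨h, hh, hG⟩
  have key : MP (d₁ + d₂) (diamond f G) := by
    unfold diamond
    refine MP.finsum _ _ fun k _ => ?_
    by_cases hk : k ≤ d₁ ∧ k ≤ d₂
    · have h1 : MP (d₁ - k) (derivative^[k] f) := hf'.iterDeriv k
      have h2 : MP (d₂ - k) (derivative^[k] G) := hG'.iterDeriv k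
      have h3 : MP (k + k) ((X * (X + 1) : Polynomial ℝ) ^ k) := by
        rw [mul_pow]; exact MP.basis rfl
      have h4 := (h1.mul h2).mul h3
      have heq : d₁ - k + (d₂ - k) + (k + k) = d₁ + d₂ := by omega
      rw [heq] at h4
      have h5 := MP.smul ((k.factorial : ℝ)⁻¹ * (k.factorial : ℝ)⁻¹)
        (by positivity) h4
      have hre : C ((k.factorial : ℝ)⁻¹ * (k.factorial : ℝ)⁻¹) *
          derivative^[k] f * derivative^[k] G * (X * (X + 1)) ^ k
          = C ((k.factorial : ℝ)⁻¹ * (k.factorial : ℝ)⁻¹) *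
            (derivative^[k] f * derivative^[k] G * (X * (X + 1)) ^ k) := by
        ring
      rw [hre]
      exact h5
    · have hz : derivative^[k] f = 0 ∨ derivative^[k] G = 0 := by
        rcases not_and_or.mp hk with hk1 | hk1
        · exact Or.inl (Polynomial.iterate_derivative_eq_zero
            (lt_of_le_of_lt hf'.natDegree_le (by omega)))
        · exact Or.inr (Polynomial.iterate_derivative_eq_zero
            (lt_of_le_of_lt hG'.natDegree_le (by omega)))
      rcases hz with hz | hz <;> rw [hz] <;> simpa using MP.zero (d₁ + d₂)
  exact key
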